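/- Let S be a staircase complex over F₂[W,Z] with bigrading (gr_W, gr_Z) determined by: the variables satisfy (gr_W, gr_Z)(W) = (−2, 0) and (gr_W, gr_Z)(Z) = (0, −2), and the generators x₀, …, x_{2n} are homogeneous with the differential homogeneous of degree (−1,−1). If φ: S → S is a homogeneous F₂[W,Z]-module map of bidegree (m, m) for some m ≥ 1, then φ = 0. -/

import Mathlib

noncomputable section

open MvPolynomial

/-- `R = F₂[W,Z]`. -/
abbrev R2 : Type := MvPolynomial (Fin 2) (ZMod 2)

def Wv : R2 := X 0
def Zv : R2 := X 1

/-- Coefficient of the monomial `W^p Z^q`. -/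
def coeffAt (p q : ℕ) (f : R2) : ZMod 2 :=
  MvPolynomial.coeff (Finsupp.single (0 : Fin 2) p + Finsupp.single (1 : Fin 2) q) f

/-- The staircase differential as an endomorphism matrix of the total module on
generators `x_0, …, x_{2n}`: `d(x_{2i+1}) = x_{2i}·W^{a_i} + x_{2i+2}·Z^{b_i}`,
`d(x_{2i}) = 0`. -/
def stairD (n : ℕ) (a b : Fin n → ℕ) :
    Matrix (Fin (2 * n + 1)) (Fin (2 * n + 1)) R2 :=
  fun j i =>
    if h : (i : ℕ) % 2 = 1 then
      if (j : ℕ) + 1 = (i : ℕ) then Wv ^ a ⟨(i : ℕ) / 2, by have := i.isLt; omega⟩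
      else if (j : ℕ) = (i : ℕ) + 1 then Zv ^ b ⟨(i : ℕ) / 2, by have := i.isLt; omega⟩
      else 0
    else 0

/-- A matrix `M` (representing an `R`-module map) is homogeneous of bidegree `(dW, dZ)`
with respect to generator bigradings, where `W` has bidegree `(−2,0)` and `Z` has
`(0,−2)`: every monomial `W^p Z^q` occurring in the `(j,i)` entry satisfies the
corresponding grading equations. -/
def hasBideg {k l : ℕ} (grWs grZs : Fin k → ℤ) (grWt grZt : Fin l → ℤ)
    (dW dZ : ℤ) (M : Matrix (Fin l) (Fin k) R2) : Prop :=
  ∀ (i : Fin k) (j : Fin l) (p q : ℕ), coeffAt p q (M j i) ≠ 0 →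
    grWt j - 2 * (p : ℤ) = grWs i + dW ∧ grZt j - 2 * (q : ℤ) = grZs i + dZ

lemma finsupp_fin2 (d : Fin 2 →₀ ℕ) :
    d = Finsupp.single (0 : Fin 2) (d 0) + Finsupp.single (1 : Fin 2) (d 1) := by
  ext x
  fin_cases x <;> simp

lemma coeffAt_W_pow (c : ℕ) : coeffAt c 0 (Wv ^ c) = 1 := by
  simp [coeffAt, Wv, MvPolynomial.coeff_X_pow]

lemma coeffAt_Z_pow (c : ℕ) : coeffAt 0 c (Zv ^ c) = 1 := by
  simp [coeffAt, Zv, MvPolynomial.coeff_X_pow]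

/-- If `S` is a bigraded staircase complex over `F₂[W,Z]` (generators homogeneous,
differential homogeneous of bidegree `(−1,−1)`, with `a_i, b_i > 0`), then any
homogeneous `F₂[W,Z]`-module map `φ : S → S` of bidegree `(m, m)` with `m ≥ 1`
is zero. -/
theorem stmt_5 (n : ℕ) (a b : Fin n → ℕ) (ha : ∀ i, 0 < a i) (hb : ∀ i, 0 < b i)
    (grW grZ : Fin (2 * n + 1) → ℤ)
    (hD : hasBideg grW grZ grW grZ (-1) (-1) (stairD n a b))
    (m : ℤ) (hm : 1 ≤ m)
    (C : Matrix (Fin (2 * n + 1)) (Fin (2 * n + 1)) R2)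
    (hC : hasBideg grW grZ grW grZ m m C) :
    C = 0 := by
  have key : ∀ (k : ℕ) (hk : k + 1 < 2 * n + 1),
      grW ⟨k + 1, hk⟩ < grW ⟨k, by omega⟩ ∧ grZ ⟨k, by omega⟩ < grZ ⟨k + 1, hk⟩ := by
    intro k hk
    rcases Nat.even_or_odd k with he | ho
    · obtain ⟨c, hc⟩ := he
      set i : Fin (2 * n + 1) := ⟨k + 1, hk⟩ with hi
      set j : Fin (2 * n + 1) := ⟨k, by omega⟩ with hj
      have h1 : (i : ℕ) % 2 = 1 := by simp [hi]; omega
      have hidx : (i : ℕ) / 2 < n := by simp [hi]; omega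
      have hent : stairD n a b j i = Wv ^ a ⟨(i : ℕ) / 2, hidx⟩ := by
        unfold stairD
        rw [dif_pos h1, if_pos (by simp [hi, hj])]
      have hco : coeffAt (a ⟨(i : ℕ) / 2, hidx⟩) 0 (stairD n a b j i) ≠ 0 := by
        rw [hent, coeffAt_W_pow]; exact one_ne_zero
      obtain ⟨e1, e2⟩ := hD i j _ 0 hco
      have hpos : (1 : ℤ) ≤ (a ⟨(i : ℕ) / 2, hidx⟩ : ℤ) := by
        exact_mod_cast ha _
      constructor <;> omega
    · obtain ⟨c, hc⟩ := ho
      set i : Fin (2 * n + 1) := ⟨k, by omega⟩ with hi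
      set j : Fin (2 * n + 1) := ⟨k + 1, hk⟩ with hj
      have h1 : (i : ℕ) % 2 = 1 := by simp [hi]; omega
      have hidx : (i : ℕ) / 2 < n := by simp [hi]; omega
      have hent : stairD n a b j i = Zv ^ b ⟨(i : ℕ) / 2, hidx⟩ := by
        unfold stairD
        rw [dif_pos h1, if_neg (by simp [hi, hj]; omega), if_pos (by simp [hi, hj])]
      have hco : coeffAt 0 (b ⟨(i : ℕ) / 2, hidx⟩) (stairD n a b j i) ≠ 0 := by
        rw [hent, coeffAt_Z_pow]; exact one_ne_zero
      obtain ⟨e1, e2⟩ := hD i j 0 _ hco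
      have hpos : (1 : ℤ) ≤ (b ⟨(i : ℕ) / 2, hidx⟩ : ℤ) := by
        exact_mod_cast hb _
      constructor <;> omega
  have hWanti : StrictAnti grW := by
    rw [Fin.strictAnti_iff_succ_lt]
    intro k
    exact (key k.val (by omega)).1
  have hZmono : StrictMono grZ := by
    rw [Fin.strictMono_iff_lt_succ]
    intro k
    exact (key k.val (by omega)).2
  ext j i d
  simp only [Matrix.zero_apply, MvPolynomial.coeff_zero]
  by_contra hne
  have hco : coeffAt (d 0) (d 1) (C j i) ≠ 0 := by
    rw [coeffAt, ← finsupp_fin2 d]; exact hne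
  obtain ⟨e1, e2⟩ := hC i j (d 0) (d 1) hco
  have h1 : grW i < grW j := by have h0 := Int.natCast_nonneg (d 0); omega
  have h2 : grZ i < grZ j := by have h0 := Int.natCast_nonneg (d 1); omega
  have hji : j < i := hWanti.lt_iff_gt.mp h1
  have hij : i < j := hZmono.lt_iff_lt.mp h2
  exact absurd hij (not_lt.mpr hji.le)
end
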